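/- Let f ∈ F_{q^2}[x] be irreducible with f* = f̄ (the reciprocal of f equals the conjugate of f). Then deg(f) is odd, and for any root α of f one has α⁻¹ = α^{q^{deg f}}. -/

import Mathlib

open Polynomial

theorem key (p k q : ℕ) (hp : p.Prime) (hq : q = p ^ k)
    (F : Type*) [Field F] [Fintype F]
    (hF : Fintype.card F = q ^ 2)
    (f : Polynomial F) [hfact : Fact (Irreducible f)] (h0 : f.coeff 0 ≠ 0)
    (hrc : ∀ i, (Polynomial.C (f.coeff 0)⁻¹ * f.reverse).coeff i = (f.coeff i) ^ q) :
    Odd f.natDegree ∧ (AdjoinRoot.root f)⁻¹ = (AdjoinRoot.root f) ^ q ^ f.natDegree := by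
  haveI : Fact p.Prime := ⟨hp⟩
  have hf : Irreducible f := hfact.out
  set n := f.natDegree with hn
  have hn0 : 0 < n := hf.natDegree_pos
  have hq1 : 1 < q := by
    have h2 : 1 < q ^ 2 := hF ▸ Fintype.one_lt_card
    by_contra hle
    push_neg at hle
    have : q ^ 2 ≤ 1 ^ 2 := Nat.pow_le_pow_left hle 2
    omega
  have hk0 : k ≠ 0 := by rintro rfl; simp at hq; omega
  haveI hcharF : CharP F p := by
    haveI := ringChar.charP F
    obtain ⟨m, hprime, hcard⟩ := FiniteField.card F (ringChar F)
    have hdvd : p ∣ ringChar F := by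
      apply hp.dvd_of_dvd_pow (n := (m : ℕ))
      rw [← hcard, hF, hq]
      exact dvd_pow (dvd_pow_self p hk0) two_ne_zero
    have hpe : p = ringChar F := (Nat.prime_dvd_prime_iff_eq hp hprime).mp hdvd
    rw [hpe]; infer_instance
  set K := AdjoinRoot f with hK
  set r : K := AdjoinRoot.root f with hr
  have hfne : f ≠ 0 := hf.ne_zero
  haveI : CharP K p := charP_of_injective_algebraMap (algebraMap F K).injective p
  let pb := AdjoinRoot.powerBasis hfne
  haveI : Module.Finite F K := pb.finite
  haveI : Fintype K := Module.fintypeOfFintype pb.basis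
  have hdim : Module.finrank F K = n := by
    rw [pb.finrank]
    rfl
  have hcardK : Fintype.card K = q ^ (2 * n) := by
    rw [Module.card_eq_pow_finrank (K := F) (V := K), hF, hdim, ← pow_mul]
  -- q-power ring homs on K
  have hpowhom : ∀ s : ℕ, ∃ φ : K →+* K, ∀ x : K, φ x = x ^ q ^ s := by
    intro s
    refine ⟨iterateFrobenius K p (k * s), fun x => ?_⟩
    rw [iterateFrobenius_def, pow_mul, ← hq]
  have hinj : ∀ s : ℕ, Function.Injective fun x : K => x ^ q ^ s := by
    intro s
    obtain ⟨φ, hφ⟩ := hpowhom s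
    have := φ.injective
    simpa only [funext hφ] using this
  -- basic root facts
  have halg : Function.Injective (algebraMap F K) := (algebraMap F K).injective
  have hroot : aeval r f = 0 := by
    rw [aeval_def, AdjoinRoot.algebraMap_eq]
    exact AdjoinRoot.eval₂_root f
  have hrootne : ∀ β : K, aeval β f = 0 → β ≠ 0 := by
    intro β hβ h
    subst h
    rw [aeval_def, eval₂_at_zero] at hβ
    exact h0 (halg (by simpa using hβ))
  have hpowhomF : ∃ ψ : F →+* F, ∀ x : F, ψ x = x ^ q := by
    refine ⟨iterateFrobenius F p k, fun x => ?_⟩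
    rw [iterateFrobenius_def, ← hq]
  obtain ⟨ψF, hψF⟩ := hpowhomF
  -- Step A : if β is a root then (β^q)⁻¹ is a root
  have hstepA : ∀ β : K, aeval β f = 0 → aeval ((β ^ q)⁻¹) f = 0 := by
    intro β hβ
    have hβ0 : β ≠ 0 := hrootne β hβ
    have hg : Polynomial.C (f.coeff 0)⁻¹ * f.reverse = f.map ψF := by
      ext i
      rw [coeff_map, hrc i, hψF]
    obtain ⟨φ, hφ⟩ := hpowhom 1
    have hcomp : φ.comp (algebraMap F K) = (algebraMap F K).comp ψF := by
      ext a
      simp [hφ, hψF, map_pow]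
    have hz : aeval (β ^ q) (Polynomial.C (f.coeff 0)⁻¹ * f.reverse) = 0 := by
      rw [hg, aeval_def, eval₂_map, ← hcomp]
      have hβq : β ^ q = φ β := by rw [hφ, pow_one]
      rw [hβq, ← Polynomial.hom_eval₂, ← aeval_def, hβ, map_zero]
    have hrev : aeval (β ^ q) f.reverse = 0 := by
      rw [map_mul, aeval_C] at hz
      rcases mul_eq_zero.mp hz with h | h
      · exact absurd (halg (by simpa using h)) (inv_ne_zero h0)
      · exact h
    have hbq : (β ^ q)⁻¹ ≠ 0 := inv_ne_zero (pow_ne_zero _ hβ0)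
    letI : Invertible ((β ^ q)⁻¹) := invertibleOfNonzero hbq
    have hiff := eval₂_reverse_eq_zero_iff (algebraMap F K) ((β ^ q)⁻¹) f
    rw [invOf_eq_inv, inv_inv] at hiff
    rw [aeval_def] at hrev ⊢
    exact hiff.mp hrev
  -- Step B : roots are stable under x ↦ x ^ q ^ 2
  have hstepB : ∀ β : K, aeval β f = 0 → aeval (β ^ q ^ 2) f = 0 := by
    intro β hβ
    obtain ⟨φ, hφ⟩ := hpowhom 2
    have hcomp : φ.comp (algebraMap F K) = algebraMap F K := by
      ext a
      simp only [RingHom.comp_apply, hφ, ← map_pow]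
      congr 1
      rw [← hF]
      exact FiniteField.pow_card a
    calc aeval (β ^ q ^ 2) f = eval₂ (algebraMap F K) (φ β) f := by rw [aeval_def, hφ]
      _ = eval₂ (φ.comp (algebraMap F K)) (φ β) f := by rw [hcomp]
      _ = φ (eval₂ (algebraMap F K) β f) := (Polynomial.hom_eval₂ _ _ _ _).symm
      _ = 0 := by rw [← aeval_def, hβ, map_zero]
  have horb : ∀ j : ℕ, aeval (r ^ q ^ (2 * j)) f = 0 := by
    intro j
    induction j with
    | zero => simpa using hroot
    | succ j ih =>
      have h := hstepB _ ih
      rw [← pow_mul, ← pow_add] at h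
      have h2 : 2 * (j + 1) = 2 * j + 2 := by ring
      rw [h2]
      exact h
  have hrn : r ^ q ^ (2 * n) = r := by
    rw [← hcardK]
    exact FiniteField.pow_card r
  -- fixed points bound
  have hfix : ∀ m : ℕ, 0 < m → r ^ q ^ (2 * m) = r → n ≤ m := by
    intro m hm hrm
    obtain ⟨φ, hφ⟩ := hpowhom (2 * m)
    have hcomm : ∀ a : F, φ (algebraMap F K a) = algebraMap F K a := by
      intro a
      rw [hφ, ← map_pow]
      congr 1
      rw [pow_mul, ← hF]
      exact FiniteField.pow_card_pow m a
    let Φ : K →ₐ[F] K := { toRingHom := φ, commutes' := hcomm }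
    have hallfix : ∀ x : K, x ^ q ^ (2 * m) = x := by
      have hsub : Algebra.adjoin F ({r} : Set K) ≤ AlgHom.equalizer Φ (AlgHom.id F K) := by
        rw [Algebra.adjoin_le_iff]
        intro x hx
        rw [Set.mem_singleton_iff] at hx
        subst hx
        show Φ r = r
        show φ r = r
        rw [hφ]
        exact hrm
      rw [AdjoinRoot.adjoinRoot_eq_top] at hsub
      intro x
      have hx : Φ x = (AlgHom.id F K) x := (AlgHom.mem_equalizer Φ (AlgHom.id F K) x).mp
        (hsub (Algebra.mem_top))
      have : φ x = x := hx
      rwa [hφ] at this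
    set P : K[X] := X ^ (q ^ (2 * m)) - X with hP
    have hq2m : 1 < q ^ (2 * m) := Nat.one_lt_pow (by omega) hq1
    have hPdeg : P.natDegree = q ^ (2 * m) := by
      rw [hP, natDegree_sub_eq_left_of_natDegree_lt, natDegree_X_pow]
      rw [natDegree_X_pow, natDegree_X]
      omega
    have hPne : P ≠ 0 := by
      intro h
      rw [h, natDegree_zero] at hPdeg
      omega
    have hle : Fintype.card K ≤ q ^ (2 * m) := by
      have hsubset : (Finset.univ : Finset K) ⊆ P.roots.toFinset := by
        intro x _
        rw [Multiset.mem_toFinset, mem_roots hPne]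
        show P.eval x = 0
        rw [hP]
        simp [hallfix x]
      calc Fintype.card K = (Finset.univ : Finset K).card := rfl
        _ ≤ P.roots.toFinset.card := Finset.card_le_card hsubset
        _ ≤ Multiset.card P.roots := Multiset.toFinset_card_le _
        _ ≤ P.natDegree := P.card_roots'
        _ = q ^ (2 * m) := hPdeg
    rw [hcardK] at hle
    have := (Nat.pow_le_pow_iff_right hq1).mp hle
    omega
  -- distinctness helper
  have hdiff : ∀ i j : ℕ, i < j → r ^ q ^ (2 * i) = r ^ q ^ (2 * j) → n ≤ j - i := by
    intro i j hij hije
    have hfixji : r ^ q ^ (2 * (j - i)) = r := by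
      refine hinj (2 * i) ?_
      show (r ^ q ^ (2 * (j - i))) ^ q ^ (2 * i) = r ^ q ^ (2 * i)
      rw [← pow_mul, ← pow_add]
      have h2 : 2 * (j - i) + 2 * i = 2 * j := by omega
      rw [h2]
      exact hije.symm
    exact hfix (j - i) (by omega) hfixji
  -- divisibility
  have hdvd : ∀ m : ℕ, r ^ q ^ (2 * m) = r → n ∣ m := by
    intro m
    induction m using Nat.strong_induction_on with
    | _ m ih =>
      intro hm
      rcases Nat.eq_zero_or_pos m with rfl | hm0
      · exact dvd_zero n
      have hnm : n ≤ m := hfix m hm0 hm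
      rcases Nat.eq_or_lt_of_le hnm with heq | hlt
      · exact heq ▸ dvd_refl n
      have hstep : r ^ q ^ (2 * (m - n)) = r := by
        refine hinj (2 * n) ?_
        show (r ^ q ^ (2 * (m - n))) ^ q ^ (2 * n) = r ^ q ^ (2 * n)
        rw [← pow_mul, ← pow_add]
        have h2 : 2 * (m - n) + 2 * n = 2 * m := by omega
        rw [h2, hm, hrn]
      have hrec := ih (m - n) (by omega) hstep
      have : n ∣ (m - n) + n := hrec.add dvd_rfl
      rwa [Nat.sub_add_cancel hnm] at this
  -- classification of roots
  have hclass : ∀ β : K, aeval β f = 0 → ∃ j, j < n ∧ β = r ^ q ^ (2 * j) := by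
    intro β hβ
    set fm := f.map (algebraMap F K) with hfm
    have hfmne : fm ≠ 0 := (Polynomial.map_ne_zero_iff halg).mpr hfne
    have hfmdeg : fm.natDegree = n := natDegree_map_eq_of_injective halg f
    set T := (Finset.range n).image (fun j => r ^ q ^ (2 * j)) with hT
    have hTsub : T ⊆ fm.roots.toFinset := by
      intro x hx
      simp only [hT, Finset.mem_image, Finset.mem_range] at hx
      obtain ⟨j, hj, rfl⟩ := hx
      rw [Multiset.mem_toFinset, mem_roots hfmne]
      show fm.eval _ = 0
      rw [hfm, eval_map, ← aeval_def]
      exact horb j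
    have hTcard : T.card = n := by
      rw [hT, Finset.card_image_of_injOn, Finset.card_range]
      intro i hi j hj hij
      simp only [Finset.coe_range, Set.mem_Iio] at hi hj
      by_contra hne
      rcases lt_or_gt_of_ne hne with h | h
      · have := hdiff i j h hij
        omega
      · have := hdiff j i h hij.symm
        omega
    have heq : T = fm.roots.toFinset := by
      refine Finset.eq_of_subset_of_card_le hTsub ?_
      rw [hTcard]
      calc fm.roots.toFinset.card ≤ Multiset.card fm.roots := Multiset.toFinset_card_le _
        _ ≤ fm.natDegree := fm.card_roots'
        _ = n := hfmdeg
    have hβmem : β ∈ fm.roots.toFinset := by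
      rw [Multiset.mem_toFinset, mem_roots hfmne]
      show fm.eval _ = 0
      rw [hfm, eval_map, ← aeval_def]
      exact hβ
    rw [← heq] at hβmem
    simp only [hT, Finset.mem_image, Finset.mem_range] at hβmem
    obtain ⟨j, hj, hje⟩ := hβmem
    exact ⟨j, hj, hje.symm⟩
  -- put things together
  have hrne : r ≠ 0 := hrootne r hroot
  obtain ⟨j, hjn, hjeq⟩ := hclass ((r ^ q)⁻¹) (hstepA r hroot)
  set e := orderOf r with he
  have hsum : r ^ (q ^ (2 * j) + q) = 1 := by
    rw [pow_add, ← hjeq]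
    exact inv_mul_cancel₀ (pow_ne_zero _ hrne)
  have hesum : e ∣ q ^ (2 * j) + q := orderOf_dvd_of_pow_eq_one hsum
  have hecard : e ∣ q ^ (2 * n) - 1 := by
    apply orderOf_dvd_of_pow_eq_one
    rw [← hcardK]
    exact FiniteField.pow_card_sub_one_eq_one r hrne
  have hcop : Nat.Coprime e q := by
    have hpe : ¬ p ∣ e := by
      intro hpdvd
      have h1 : p ∣ q ^ (2 * n) - 1 := hpdvd.trans hecard
      have h2 : p ∣ q ^ (2 * n) := by
        rw [hq]
        exact dvd_pow (dvd_pow_self p hk0) (by positivity)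
      have := (Nat.dvd_sub h2 h1)
      have hge : 1 ≤ q ^ (2 * n) := Nat.one_le_pow _ _ (by omega)
      rw [Nat.sub_sub_self hge] at this
      have h4 := Nat.le_of_dvd one_pos this
      have h5 := hp.two_le
      omega
    rw [hq]
    exact (hp.coprime_iff_not_dvd.2 hpe).symm.pow_right k
  -- an odd exponent t with e ∣ q ^ t + 1
  have ht : ∃ t, Odd t ∧ e ∣ q ^ t + 1 := by
    rcases Nat.eq_zero_or_pos j with rfl | hj0
    · refine ⟨1, odd_one, ?_⟩
      simpa [pow_one, Nat.add_comm] using hesum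
    · refine ⟨2 * j - 1, ⟨j - 1, by omega⟩, ?_⟩
      have hsplit : q ^ (2 * j) + q = q * (q ^ (2 * j - 1) + 1) := by
        rw [Nat.mul_add, mul_one]
        congr 1
        rw [← pow_succ']
        congr 1
        omega
      rw [hsplit] at hesum
      exact (Nat.Coprime.dvd_of_dvd_mul_left hcop hesum)
  obtain ⟨t, htodd, hte⟩ := ht
  have hqt : r ^ q ^ t = r⁻¹ := by
    have h1 : r ^ (q ^ t + 1) = 1 := orderOf_dvd_iff_pow_eq_one.mp hte
    rw [pow_add, pow_one] at h1
    exact (inv_eq_of_mul_eq_one_left h1).symm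
  have h2t : r ^ q ^ (2 * t) = r := by
    have hexp : q ^ (2 * t) = q ^ t * q ^ t := by rw [← pow_add]; congr 1; omega
    rw [hexp, pow_mul, hqt, inv_pow, hqt, inv_inv]
  have hnt : n ∣ t := hdvd t h2t
  obtain ⟨s, hs⟩ := hnt
  have hnodd : Odd n := (Nat.odd_mul.mp (hs ▸ htodd)).1
  have hkey : ∀ i : ℕ, r ^ q ^ (n * (2 * i + 1)) = r ^ q ^ n := by
    intro i
    induction i with
    | zero => norm_num
    | succ i ih =>
      have h2 : n * (2 * (i + 1) + 1) = 2 * n + n * (2 * i + 1) := by ring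
      rw [h2, pow_add, pow_mul, hrn]
      exact ih
  refine ⟨hnodd, ?_⟩
  obtain ⟨i, hi⟩ := (Nat.odd_mul.mp (hs ▸ htodd)).2
  have hts : r ^ q ^ t = r ^ q ^ n := by
    rw [hs, hi]
    exact hkey i
  rw [← hts, hqt]

theorem stmt_5 (p k q : ℕ) (hp : p.Prime) (hq : q = p ^ k)
    (F L : Type*) [Field F] [Fintype F] [Field L] [Algebra F L]
    (hF : Fintype.card F = q ^ 2)
    (f : Polynomial F) (hf : Irreducible f) (h0 : f.coeff 0 ≠ 0)
    (hrc : ∀ i, (Polynomial.C (f.coeff 0)⁻¹ * f.reverse).coeff i = (f.coeff i) ^ q) :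
    Odd f.natDegree ∧
      ∀ α : L, Polynomial.aeval α f = 0 → α⁻¹ = α ^ q ^ f.natDegree := by
  haveI : Fact (Irreducible f) := ⟨hf⟩
  obtain ⟨hodd, hroot⟩ := key p k q hp hq F hF f h0 hrc
  refine ⟨hodd, fun α hα => ?_⟩
  let φ := AdjoinRoot.liftAlgHom f (Algebra.ofId F L) α hα
  have hα' : α = φ (AdjoinRoot.root f) := (AdjoinRoot.liftAlgHom_root f (Algebra.ofId F L) α hα).symm
  rw [hα', ← map_pow, ← hroot, ← map_inv₀]
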